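/- Let n ≥ 1 and consider the two lexical matchings M^n_{2n+1,n+1} and M^{n+1}_{2n+1,n+1} between levels n+1 and n+2 of Q_{2n+1}. For every vertex x in level n+1 of Q_{2n+1}: x is matched by M^n_{2n+1,n+1} and unmatched by M^{n+1}_{2n+1,n+1} if and only if x ∈ D^{=0}_{2n+1,n+1}; x is matched by M^{n+1}_{2n+1,n+1} and unmatched by M^n_{2n+1,n+1} if and only if x ∈ D^-_{2n+1,n+1}; and x is unmatched by both matchings if and only if x ∈ D^{>0}_{2n+1,n+1}. -/

import Mathlib

/-- The Hamming weight of a bitstring of length `n`, i.e., its number of 1-bits. -/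
def wt {n : ℕ} (x : Fin n → Bool) : ℕ := (Finset.univ.filter fun i => x i = true).card

/-- The `n`-dimensional hypercube: vertices are bitstrings of length `n`, two of which are
adjacent iff they differ in exactly one position. -/
def cube (n : ℕ) : SimpleGraph (Fin n → Bool) where
  Adj x y := hammingDist x y = 1
  symm := by constructor; intro x y h; simpa [hammingDist_comm] using h
  loopless := by constructor; intro x h; simp [hammingDist_self] at h
/-- The number of 1-bits among the first `j` bits of `x` (interpreting a bitstring as a
lattice path, this determines the height after `j` steps). -/
def onesUpTo {n : ℕ} (x : Fin n → Bool) (j : ℕ) : ℕ :=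
  (Finset.univ.filter fun i : Fin n => i.val < j ∧ x i = true).card

/-- The height of the lattice path of `x` after `j` steps: number of 1s minus number of 0s
among the first `j` bits (appended steps beyond the length of `x` being down-steps). -/
def hgt {n : ℕ} (x : Fin n → Bool) (j : ℕ) : ℤ := 2 * (onesUpTo x j : ℤ) - (j : ℤ)

/-- The length of the extended lattice path `x^↑`: if the final height `2·wt x − n` is `≥ −1`,
down-steps are appended until the path ends at height `−1` (total length `2·wt x + 1`);
otherwise nothing is appended. -/
def extLen {n : ℕ} (x : Fin n → Bool) : ℕ := max n (2 * wt x + 1)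

/-- Position `j` (0-indexed) of the extended path `x^↑` is a down-step: either it is a 0-bit
of `x`, or one of the appended down-steps. -/
def isDownStep {n : ℕ} (x : Fin n → Bool) (j : ℕ) : Prop :=
  j < extLen x ∧ ∀ h : j < n, x ⟨j, h⟩ = false

/-- The `i`-lexical matching `M^i_{n,k}` between levels `k` and `k+1` of the `n`-cube, as a
relation: `lexUp n k i x y` holds iff `x` lies in level `k` and `y = M^{i,↑}_{n,k}(x)`, i.e.,
`y` is obtained from `x` by flipping to 1 the 0-bit at the `i`-th down-step of `x^↑` in the
order of decreasing starting height, ties broken from right to left, counting from 0,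
provided this down-step lies within `x`. -/
def lexUp (n k i : ℕ) (x y : Fin n → Bool) : Prop :=
  wt x = k ∧ ∃ d : ℕ, d < n ∧ isDownStep x d ∧
    ({j : ℕ | isDownStep x j ∧ (hgt x d < hgt x j ∨ (hgt x j = hgt x d ∧ d < j))}).ncard = i ∧
    y = fun t : Fin n => if t.val = d then true else x t
/-- `x ∈ D_{m,k}`: a bitstring of length `m` with exactly `k` 1-bits such that every prefix
contains at least as many 1s as 0s. -/
def inD (m k : ℕ) (x : Fin m → Bool) : Prop :=
  wt x = k ∧ ∀ j ≤ m, j ≤ 2 * onesUpTo x j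

/-- `x ∈ D^{>0}_{m,k}`: moreover every nonempty prefix contains strictly more 1s than 0s. -/
def inDgt0 (m k : ℕ) (x : Fin m → Bool) : Prop :=
  wt x = k ∧ ∀ j, 1 ≤ j → j ≤ m → j < 2 * onesUpTo x j

/-- `x ∈ D^{=0}_{m,k}`: in `D_{m,k}` with at least one nonempty prefix containing equally
many 1s and 0s. -/
def inDeq0 (m k : ℕ) (x : Fin m → Bool) : Prop :=
  inD m k x ∧ ∃ j, 1 ≤ j ∧ j ≤ m ∧ j = 2 * onesUpTo x j

/-- `x ∈ D^-_{m,k}`: a bitstring of length `m` with exactly `k` 1-bits such that exactly one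
prefix contains strictly fewer 1s than 0s. -/
def inDminus (m k : ℕ) (x : Fin m → Bool) : Prop :=
  wt x = k ∧ ({j : ℕ | j ≤ m ∧ 2 * onesUpTo x j < j}).ncard = 1

namespace FLIV
open Finset

variable {n : ℕ} (x : Fin (2*n+1) → Bool)

lemma card_true (hx : wt x = n + 1) :
    (Finset.univ.filter fun i : Fin (2*n+1) => x i = true).card = n + 1 := hx

lemma card_false (hx : wt x = n + 1) :
    (Finset.univ.filter fun i : Fin (2*n+1) => x i = false).card = n := by
  classical
  have h1 : (Finset.univ.filter fun i : Fin (2*n+1) => x i = false)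
      = Finset.univ \ (Finset.univ.filter fun i : Fin (2*n+1) => x i = true) := by
    rw [← Finset.filter_not]
    apply Finset.filter_congr
    intro i _
    simp
  rw [h1, Finset.card_sdiff_of_subset (Finset.filter_subset _ _), card_true x hx]
  simp
  omega

lemma extLen_eq (hx : wt x = n + 1) : extLen x = 2*n+3 := by
  rw [extLen, hx]; omega

lemma mem_DS (hx : wt x = n + 1) (j : ℕ) :
    isDownStep x j ↔ ((∃ h : j < 2*n+1, x ⟨j, h⟩ = false) ∨ j = 2*n+1 ∨ j = 2*n+2) := by
  rw [isDownStep, extLen_eq x hx]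
  constructor
  · rintro ⟨hj, hall⟩
    by_cases h : j < 2*n+1
    · exact Or.inl ⟨h, hall h⟩
    · right; omega
  · rintro (⟨h, hf⟩ | h | h)
    · exact ⟨by omega, fun h' => hf⟩
    · exact ⟨by omega, fun h' => absurd h' (by omega)⟩
    · exact ⟨by omega, fun h' => absurd h' (by omega)⟩

lemma onesUpTo_of_ge {j : ℕ} (hj : 2*n+1 ≤ j) : onesUpTo x j = wt x := by
  classical
  unfold onesUpTo wt
  apply congrArg
  apply Finset.filter_congr
  intro i _
  have : i.val < j := lt_of_lt_of_le i.isLt hj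
  simp [this]

lemma hgt_zero : hgt x 0 = 0 := by
  unfold hgt onesUpTo
  simp

lemma hgt_N (hx : wt x = n + 1) : hgt x (2*n+1) = 1 := by
  unfold hgt
  rw [onesUpTo_of_ge x (le_refl _), hx]
  push_cast
  ring

lemma hgt_N1 (hx : wt x = n + 1) : hgt x (2*n+2) = 0 := by
  unfold hgt
  rw [onesUpTo_of_ge x (by omega), hx]
  push_cast
  ring

lemma onesUpTo_succ {j : ℕ} (hj : j < 2*n+1) :
    onesUpTo x (j+1) = onesUpTo x j + (if x ⟨j, hj⟩ = true then 1 else 0) := by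
  classical
  unfold onesUpTo
  have h1 : (Finset.univ.filter fun i : Fin (2*n+1) => i.val < j + 1 ∧ x i = true)
      = (Finset.univ.filter fun i : Fin (2*n+1) => i.val < j ∧ x i = true)
        ∪ (Finset.univ.filter fun i : Fin (2*n+1) => i.val = j ∧ x i = true) := by
    rw [← Finset.filter_or]
    apply Finset.filter_congr
    intro i _
    constructor
    · rintro ⟨h, hx⟩
      rcases Nat.lt_succ_iff_lt_or_eq.mp h with h' | h'
      · exact Or.inl ⟨h', hx⟩
      · exact Or.inr ⟨h', hx⟩
    · rintro (⟨h, hx⟩ | ⟨h, hx⟩)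
      · exact ⟨by omega, hx⟩
      · exact ⟨by omega, hx⟩
  rw [h1, Finset.card_union_of_disjoint]
  · congr 1
    by_cases hxj : x ⟨j, hj⟩ = true
    · have : (Finset.univ.filter fun i : Fin (2*n+1) => i.val = j ∧ x i = true) = {⟨j, hj⟩} := by
        ext i
        simp only [Finset.mem_filter, Finset.mem_univ, true_and, Finset.mem_singleton]
        constructor
        · rintro ⟨h, _⟩; exact Fin.ext h
        · rintro rfl; exact ⟨rfl, hxj⟩
      rw [this]; simp [hxj]
    · have : (Finset.univ.filter fun i : Fin (2*n+1) => i.val = j ∧ x i = true) = ∅ := by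
        ext i
        simp only [Finset.mem_filter, Finset.mem_univ, true_and, Finset.notMem_empty, iff_false]
        rintro ⟨h, hxi⟩
        apply hxj
        rw [← hxi]; congr 1; exact (Fin.ext h).symm
      rw [this]; simp [hxj]
  · rw [Finset.disjoint_filter]
    rintro i _ ⟨h, _⟩ ⟨h', _⟩
    omega

lemma hgt_succ {j : ℕ} (hj : j < 2*n+1) :
    hgt x (j+1) = if x ⟨j, hj⟩ = true then hgt x j + 1 else hgt x j - 1 := by
  unfold hgt
  rw [onesUpTo_succ x hj]
  by_cases h : x ⟨j, hj⟩ = true <;> simp [h] <;> ring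

lemma hgt_succ_false {j : ℕ} (hj : j < 2*n+1) (hf : x ⟨j, hj⟩ = false) :
    hgt x (j+1) = hgt x j - 1 := by
  rw [hgt_succ x hj, hf]; simp

end FLIV
namespace FLIV
open Finset

variable {n : ℕ} (x : Fin (2*n+1) → Bool)

/-- The set of down-steps. -/
def DS : Set ℕ := {j | isDownStep x j}

lemma DS_finite : (DS x).Finite := by
  apply Set.Finite.subset (Set.finite_Iio (extLen x))
  intro j hj
  exact hj.1

lemma mem_DS_iff (hx : wt x = n + 1) (j : ℕ) :
    j ∈ DS x ↔ ((∃ h : j < 2*n+1, x ⟨j, h⟩ = false) ∨ j = 2*n+1 ∨ j = 2*n+2) :=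
  mem_DS x hx j

lemma N_mem_DS (hx : wt x = n + 1) : (2*n+1) ∈ DS x := by
  rw [mem_DS_iff x hx]; tauto

lemma N1_mem_DS (hx : wt x = n + 1) : (2*n+2) ∈ DS x := by
  rw [mem_DS_iff x hx]; tauto

lemma inner_mem_DS (hx : wt x = n + 1) {j : ℕ} (hj : j < 2*n+1) (hf : x ⟨j, hj⟩ = false) :
    j ∈ DS x := by
  rw [mem_DS_iff x hx]; exact Or.inl ⟨hj, hf⟩

lemma DS_ncard (hx : wt x = n + 1) : (DS x).ncard = n + 2 := by
  classical
  have hds : DS x = (Fin.val '' {i : Fin (2*n+1) | x i = false}) ∪ {2*n+1, 2*n+2} := by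
    ext j
    rw [mem_DS_iff x hx]
    simp only [Set.mem_union, Set.mem_image, Set.mem_setOf_eq, Set.mem_insert_iff,
      Set.mem_singleton_iff]
    constructor
    · rintro (⟨h, hf⟩ | h | h)
      · exact Or.inl ⟨⟨j, h⟩, hf, rfl⟩
      · tauto
      · tauto
    · rintro (⟨i, hf, rfl⟩ | h | h)
      · exact Or.inl ⟨i.isLt, by simpa using hf⟩
      · tauto
      · tauto
  rw [hds, Set.ncard_union_eq]
  · rw [Set.ncard_image_of_injective _ Fin.val_injective, Set.ncard_pair (by omega : 2*n+1 ≠ 2*n+2)]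
    have : {i : Fin (2*n+1) | x i = false} = ↑(Finset.univ.filter fun i : Fin (2*n+1) => x i = false) := by
      ext i; simp
    rw [this, Set.ncard_coe_finset, card_false x hx]
  · rw [Set.disjoint_left]
    rintro a ⟨i, _, rfl⟩ h
    simp only [Set.mem_insert_iff, Set.mem_singleton_iff] at h
    have := i.isLt
    omega

/-- key for lexicographic ordering -/
def key (j : ℕ) : ℤ ×ₗ ℕ := toLex (hgt x j, j)

lemma key_lt_iff (d j : ℕ) :
    key x d < key x j ↔ (hgt x d < hgt x j ∨ (hgt x j = hgt x d ∧ d < j)) := by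
  rw [key, key, Prod.Lex.lt_iff]
  constructor
  · rintro (h | ⟨h1, h2⟩)
    · exact Or.inl h
    · exact Or.inr ⟨h1.symm, h2⟩
  · rintro (h | ⟨h1, h2⟩)
    · exact Or.inl h
    · exact Or.inr ⟨h1.symm, h2⟩

/-- The set whose cardinality is the rank of `d`. -/
def bset (d : ℕ) : Set ℕ :=
  {j : ℕ | isDownStep x j ∧ (hgt x d < hgt x j ∨ (hgt x j = hgt x d ∧ d < j))}

lemma bset_eq (d : ℕ) : bset x d = {j ∈ DS x | key x d < key x j} := by
  ext j
  simp only [bset, Set.mem_setOf_eq, DS, key_lt_iff, Set.mem_sep_iff]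

lemma matched_iff (k i : ℕ) (hx : wt x = k) :
    (∃ y, lexUp (2*n+1) k i x y) ↔
      ∃ d, d < 2*n+1 ∧ d ∈ DS x ∧ (bset x d).ncard = i := by
  constructor
  · rintro ⟨y, -, d, hd, hds, hcard, -⟩
    exact ⟨d, hd, hds, hcard⟩
  · rintro ⟨d, hd, hds, hcard⟩
    exact ⟨fun t : Fin (2*n+1) => if t.val = d then true else x t, hx, d, hd, hds, hcard, rfl⟩

end FLIV
namespace FLIV
open Finset

variable {n : ℕ} (x : Fin (2*n+1) → Bool)

lemma ncard_DS_diff (hx : wt x = n + 1) {F : Set ℕ} (hF : F ⊆ DS x) :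
    (DS x \ F).ncard = n + 2 - F.ncard := by
  rw [Set.ncard_diff hF ((DS_finite x).subset hF), DS_ncard x hx]

lemma key_injective : Function.Injective (key x) := by
  intro i j h
  have := congrArg (fun p : ℤ ×ₗ ℕ => (ofLex p).2) h
  simpa [key] using this

lemma exists_cross {l c : ℕ} {h : ℤ} (hc : c ≤ 2*n+1) (hl : l ≤ c)
    (hhl : h ≤ hgt x l) (hneg : hgt x c < h) :
    ∃ e, l ≤ e ∧ e < c ∧ ∃ he : e < 2*n+1, hgt x e = h ∧ x ⟨e, he⟩ = false := by
  classical
  set S : Finset ℕ := (Finset.range (c+1)).filter (fun j => l ≤ j ∧ h ≤ hgt x j) with hS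
  have hlS : l ∈ S := by
    simp only [hS, Finset.mem_filter, Finset.mem_range]
    exact ⟨by omega, le_refl l, hhl⟩
  have hSne : S.Nonempty := ⟨l, hlS⟩
  set e := S.max' hSne with he
  have heS : e ∈ S := S.max'_mem hSne
  simp only [hS, Finset.mem_filter, Finset.mem_range] at heS
  obtain ⟨hec, hle, hge⟩ := heS
  have henec : e ≠ c := by
    intro hcontra
    rw [hcontra] at hge
    omega
  have heltc : e < c := by omega
  have heN : e < 2*n+1 := by omega
  have hnot : e + 1 ∉ S := by
    intro hmem
    have := S.le_max' _ hmem
    omega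
  have hlt : hgt x (e+1) < h := by
    by_contra hcon
    apply hnot
    simp only [hS, Finset.mem_filter, Finset.mem_range]
    exact ⟨by omega, by omega, by omega⟩
  have hxe : x ⟨e, heN⟩ = false := by
    cases hxe : x ⟨e, heN⟩
    · rfl
    · have := hgt_succ x heN
      rw [hxe] at this
      simp at this
      omega
  have hstep := hgt_succ_false x heN hxe
  refine ⟨e, hle, heltc, heN, by omega, hxe⟩

lemma hxd_of_DS {d : ℕ} (hds : d ∈ DS x) (hd : d < 2*n+1) : x ⟨d, hd⟩ = false := hds.2 hd

end FLIV
namespace FLIV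
open Finset

variable {n : ℕ} (x : Fin (2*n+1) → Bool)

lemma statusA (hn : 1 ≤ n) (hx : wt x = n + 1)
    (hpos : ∀ j, 1 ≤ j → j ≤ 2*n+1 → 0 < hgt x j) (i : ℕ) (hi : n ≤ i) :
    ¬ ∃ y, lexUp (2*n+1) (n+1) i x y := by
  rw [matched_iff x _ i hx]
  rintro ⟨d, hd, hds, hcard⟩
  have hxd : x ⟨d, hd⟩ = false := hxd_of_DS x hds hd
  have hstep := hgt_succ_false x hd hxd
  have hp := hpos (d+1) (by omega) (by omega)
  have h2 : 2 ≤ hgt x d := by omega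
  have hN := hgt_N x hx
  have hN1 := hgt_N1 x hx
  have hF : ({d, 2*n+1, 2*n+2} : Set ℕ) ⊆ DS x := by
    rintro j (rfl | rfl | rfl)
    · exact hds
    · exact N_mem_DS x hx
    · exact N1_mem_DS x hx
  have hsub : bset x d ⊆ DS x \ {d, 2*n+1, 2*n+2} := by
    rintro j ⟨hjds, hcond⟩
    refine ⟨hjds, ?_⟩
    rintro (rfl | rfl | rfl)
    · rcases hcond with h | ⟨h1, h2⟩ <;> omega
    · rw [hN] at hcond; rcases hcond with h | ⟨h1, h2⟩ <;> omega
    · rw [hN1] at hcond; rcases hcond with h | ⟨h1, h2⟩ <;> omega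
  have hFcard : ({d, 2*n+1, 2*n+2} : Set ℕ).ncard = 3 := by
    rw [Set.ncard_insert_of_notMem (by simp; omega) ((Set.finite_singleton _).insert _),
      Set.ncard_pair (by omega)]
  have hle := Set.ncard_le_ncard hsub ((DS_finite x).diff)
  rw [ncard_DS_diff x hx hF, hFcard] at hle
  omega

lemma statusB (hn : 1 ≤ n) (hx : wt x = n + 1)
    (hge : ∀ j ≤ 2*n+1, 0 ≤ hgt x j)
    (hex : ∃ j, 1 ≤ j ∧ j ≤ 2*n+1 ∧ hgt x j = 0) :
    (∃ y, lexUp (2*n+1) (n+1) n x y) ∧ ¬ (∃ y, lexUp (2*n+1) (n+1) (n+1) x y) := by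
  classical
  have hN := hgt_N x hx
  have hN1 := hgt_N1 x hx
  -- every inner down-step has height ≥ 1
  have hinner : ∀ j (hj : j < 2*n+1), x ⟨j, hj⟩ = false → 1 ≤ hgt x j := by
    intro j hj hf
    have hstep := hgt_succ_false x hj hf
    have := hge (j+1) (by omega)
    omega
  constructor
  · -- matched by M^n
    obtain ⟨j', h1, h2, h3⟩ := hex
    obtain ⟨j0, hj0mem, hmin0⟩ := Finset.exists_min_image
      ((Finset.range (2*n+2)).filter (fun j => 1 ≤ j ∧ hgt x j = 0)) id
      ⟨j', by simp only [Finset.mem_filter, Finset.mem_range]; exact ⟨by omega, h1, h3⟩⟩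
    simp only [Finset.mem_filter, Finset.mem_range] at hj0mem
    obtain ⟨hj0r, hj01, hj0z⟩ := hj0mem
    have hmin : ∀ j, 1 ≤ j → j ≤ 2*n+1 → hgt x j = 0 → j0 ≤ j := by
      intro j ha hb hc
      exact hmin0 j (by simp only [Finset.mem_filter, Finset.mem_range]; exact ⟨by omega, ha, hc⟩)
    obtain ⟨d0, hd0⟩ : ∃ d0, d0 = j0 - 1 := ⟨_, rfl⟩
    have hd0succ : d0 + 1 = j0 := by omega
    have hd0N : d0 < 2*n+1 := by omega
    have hxd0 : x ⟨d0, hd0N⟩ = false := by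
      cases hxe : x ⟨d0, hd0N⟩
      · rfl
      · have := hgt_succ x hd0N
        rw [hxe, hd0succ] at this
        simp at this
        have := hge d0 (by omega)
        omega
    have hstep := hgt_succ_false x hd0N hxd0
    rw [hd0succ] at hstep
    have hhd0 : hgt x d0 = 1 := by omega
    have hd0DS : d0 ∈ DS x := inner_mem_DS x hx hd0N hxd0
    have hbeq : bset x d0 = DS x \ {d0, 2*n+2} := by
      ext j
      constructor
      · rintro ⟨hjds, hcond⟩
        refine ⟨hjds, ?_⟩
        rintro (rfl | rfl)
        · rcases hcond with h | ⟨h1, h2⟩ <;> omega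
        · rw [hN1] at hcond; rw [hhd0] at hcond; rcases hcond with h | ⟨h1, h2⟩ <;> omega
      · rintro ⟨hjds, hne⟩
        simp only [Set.mem_insert_iff, Set.mem_singleton_iff, not_or] at hne
        obtain ⟨hne0, hne2⟩ := hne
        refine ⟨hjds, ?_⟩
        rw [hhd0]
        rcases (mem_DS_iff x hx j).mp hjds with ⟨hj, hf⟩ | rfl | rfl
        · have h1 := hinner j hj hf
          rcases lt_or_eq_of_le h1 with h | h
          · exact Or.inl h
          · -- hgt x j = 1 ; show d0 < j
            refine Or.inr ⟨h.symm, ?_⟩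
            by_contra hcon
            have hjd0 : j < d0 := by omega
            have hstepj := hgt_succ_false x hj hf
            have : j0 ≤ j + 1 := hmin (j+1) (by omega) (by omega) (by omega)
            omega
        · rw [hN]; exact Or.inr ⟨rfl, by omega⟩
        · exact absurd rfl hne2
    rw [matched_iff x _ n hx]
    refine ⟨d0, hd0N, hd0DS, ?_⟩
    rw [hbeq, ncard_DS_diff x hx ?_, Set.ncard_pair (by omega)]
    · omega
    · rintro j (rfl | rfl)
      · exact hd0DS
      · exact N1_mem_DS x hx
  · -- unmatched by M^{n+1}
    rw [matched_iff x _ (n+1) hx]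
    rintro ⟨d, hd, hds, hcard⟩
    have hxd : x ⟨d, hd⟩ = false := hxd_of_DS x hds hd
    have h1 := hinner d hd hxd
    have hsub : bset x d ⊆ DS x \ {d, 2*n+2} := by
      rintro j ⟨hjds, hcond⟩
      refine ⟨hjds, ?_⟩
      rintro (rfl | rfl)
      · rcases hcond with h | ⟨h1, h2⟩ <;> omega
      · rw [hN1] at hcond; rcases hcond with h | ⟨h1', h2'⟩ <;> omega
    have hF : ({d, 2*n+2} : Set ℕ) ⊆ DS x := by
      rintro j (rfl | rfl)
      · exact hds
      · exact N1_mem_DS x hx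
    have hle := Set.ncard_le_ncard hsub ((DS_finite x).diff)
    rw [ncard_DS_diff x hx hF, Set.ncard_pair (by omega)] at hle
    omega

end FLIV
namespace FLIV
open Finset

variable {n : ℕ} (x : Fin (2*n+1) → Bool)

lemma statusC (hn : 1 ≤ n) (hx : wt x = n + 1)
    (j1 : ℕ) (hj1N : j1 ≤ 2*n+1) (hj1 : hgt x j1 < 0)
    (huniq : ∀ j ≤ 2*n+1, hgt x j < 0 → j = j1) :
    (∃ y, lexUp (2*n+1) (n+1) (n+1) x y) ∧ ¬ (∃ y, lexUp (2*n+1) (n+1) n x y) := by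
  classical
  have hN := hgt_N x hx
  have hN1 := hgt_N1 x hx
  have h0 := hgt_zero x
  have hj11 : 1 ≤ j1 := by
    rcases Nat.eq_zero_or_pos j1 with h | h
    · rw [h, h0] at hj1; omega
    · exact h
  have hj1ltN : j1 < 2*n+1 := by
    rcases lt_or_eq_of_le hj1N with h | h
    · exact h
    · rw [h, hN] at hj1; omega
  obtain ⟨d1, hd1⟩ : ∃ d1, d1 = j1 - 1 := ⟨_, rfl⟩
  have hd1succ : d1 + 1 = j1 := by omega
  have hd1N : d1 < 2*n+1 := by omega
  have hd1ge : 0 ≤ hgt x d1 := by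
    by_contra hcon
    have := huniq d1 (by omega) (by omega)
    omega
  have hxd1 : x ⟨d1, hd1N⟩ = false := by
    cases hxe : x ⟨d1, hd1N⟩
    · rfl
    · have := hgt_succ x hd1N
      rw [hxe, hd1succ] at this
      simp at this
      omega
  have hstep := hgt_succ_false x hd1N hxd1
  rw [hd1succ] at hstep
  have hhj1 : hgt x j1 = -1 := by omega
  have hhd1 : hgt x d1 = 0 := by omega
  have hd1DS : d1 ∈ DS x := inner_mem_DS x hx hd1N hxd1
  -- other inner down-steps have height ≥ 1
  have hinner : ∀ j (hj : j < 2*n+1), x ⟨j, hj⟩ = false → j ≠ d1 → 1 ≤ hgt x j := by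
    intro j hj hf hne
    have hstepj := hgt_succ_false x hj hf
    by_contra hcon
    have hneg : hgt x (j+1) < 0 := by omega
    have := huniq (j+1) (by omega) hneg
    omega
  have hbeq : bset x d1 = DS x \ {d1} := by
    ext j
    constructor
    · rintro ⟨hjds, hcond⟩
      refine ⟨hjds, ?_⟩
      intro hmem
      rw [Set.mem_singleton_iff] at hmem
      subst hmem
      rcases hcond with h | ⟨h1, h2⟩ <;> omega
    · rintro ⟨hjds, hne⟩
      rw [Set.mem_singleton_iff] at hne
      refine ⟨hjds, ?_⟩
      rw [hhd1]
      rcases (mem_DS_iff x hx j).mp hjds with ⟨hj, hf⟩ | rfl | rfl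
      · exact Or.inl (by have := hinner j hj hf hne; omega)
      · rw [hN]; exact Or.inl (by omega)
      · rw [hN1]; exact Or.inr ⟨rfl, by omega⟩
  have hbcard : (bset x d1).ncard = n + 1 := by
    rw [hbeq, ncard_DS_diff x hx (by rintro j rfl; exact hd1DS), Set.ncard_singleton]
    omega
  constructor
  · rw [matched_iff x _ (n+1) hx]
    exact ⟨d1, hd1N, hd1DS, hbcard⟩
  · rw [matched_iff x _ n hx]
    rintro ⟨d, hd, hds, hcard⟩
    by_cases hdd1 : d = d1
    · subst hdd1
      rw [hbcard] at hcard
      omega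
    · have hxd : x ⟨d, hd⟩ = false := hxd_of_DS x hds hd
      have hge1 := hinner d hd hxd hdd1
      have hF : ({d, d1, 2*n+2} : Set ℕ) ⊆ DS x := by
        rintro j (rfl | rfl | rfl)
        · exact hds
        · exact hd1DS
        · exact N1_mem_DS x hx
      have hsub : bset x d ⊆ DS x \ {d, d1, 2*n+2} := by
        rintro j ⟨hjds, hcond⟩
        refine ⟨hjds, ?_⟩
        rintro (rfl | rfl | rfl)
        · rcases hcond with h | ⟨h1, h2⟩ <;> omega
        · rw [hhd1] at hcond; rcases hcond with h | ⟨h1, h2⟩ <;> omega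
        · rw [hN1] at hcond; rcases hcond with h | ⟨h1, h2⟩ <;> omega
      have hFcard : ({d, d1, 2*n+2} : Set ℕ).ncard = 3 := by
        rw [Set.ncard_insert_of_notMem (by simp; omega) ((Set.finite_singleton _).insert _),
          Set.ncard_pair (by omega)]
      have hle := Set.ncard_le_ncard hsub ((DS_finite x).diff)
      rw [ncard_DS_diff x hx hF, hFcard] at hle
      omega

end FLIV
namespace FLIV
open Finset

variable {n : ℕ} (x : Fin (2*n+1) → Bool)

lemma hgt_succ_cases {j : ℕ} (hj : j < 2*n+1) :
    hgt x (j+1) = hgt x j + 1 ∨ hgt x (j+1) = hgt x j - 1 := by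
  have h := hgt_succ x hj
  cases hxe : x ⟨j, hj⟩ <;> rw [hxe] at h <;> simp at h <;> [right; left] <;> omega

lemma statusD (hn : 1 ≤ n) (hx : wt x = n + 1)
    {a b : ℕ} (haN : a ≤ 2*n+1) (hbN : b ≤ 2*n+1) (hab : a < b)
    (hga : hgt x a < 0) (hgb : hgt x b < 0) :
    (∃ y, lexUp (2*n+1) (n+1) n x y) ∧ (∃ y, lexUp (2*n+1) (n+1) (n+1) x y) := by
  classical
  have hN := hgt_N x hx
  have hN1 := hgt_N1 x hx
  have h0 := hgt_zero x
  -- two distinct inner down-steps of height ≤ 0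
  obtain ⟨e1, e2, he1N, he2N, hne, hge1, hge2, he1DS, he2DS⟩ :
      ∃ e1 e2, e1 < 2*n+1 ∧ e2 < 2*n+1 ∧ e1 ≠ e2 ∧ hgt x e1 ≤ 0 ∧ hgt x e2 ≤ 0 ∧
        e1 ∈ DS x ∧ e2 ∈ DS x := by
    obtain ⟨e1, -, he1a, he1N, hh1, hx1⟩ :=
      exists_cross x (l := 0) (c := a) (h := 0) haN (by omega) (by omega) (by omega)
    by_cases hdeep : ∃ c, c ≤ 2*n+1 ∧ hgt x c ≤ -2
    · obtain ⟨c, hcN, hc2⟩ := hdeep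
      obtain ⟨e2, -, he2c, he2N, hh2, hx2⟩ :=
        exists_cross x (l := 0) (c := c) (h := -1) hcN (by omega) (by omega) (by omega)
      exact ⟨e1, e2, he1N, he2N, by rintro rfl; omega, by omega, by omega,
        inner_mem_DS x hx he1N hx1, inner_mem_DS x hx he2N hx2⟩
    · push_neg at hdeep
      have haltN : a < 2*n+1 := by
        rcases lt_or_eq_of_le haN with h | h
        · exact h
        · rw [h, hN] at hga; omega
      have hda := hdeep (a+1) (by omega)
      have hstep := hgt_succ_cases x haltN
      have hda1 : 0 ≤ hgt x (a+1) := by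
        have := hdeep a haN
        omega
      obtain ⟨e2, he2a, he2b, he2N, hh2, hx2⟩ :=
        exists_cross x (l := a+1) (c := b) (h := 0) hbN (by omega) (by omega) (by omega)
      exact ⟨e1, e2, he1N, he2N, by omega, by omega, by omega,
        inner_mem_DS x hx he1N hx1, inner_mem_DS x hx he2N hx2⟩
  -- small keys
  have hkey_small : ∀ e, e < 2*n+1 → hgt x e ≤ 0 →
      key x e < key x (2*n+1) ∧ key x e < key x (2*n+2) := by
    intro e heN hge
    constructor
    · rw [key_lt_iff, hN]; exact Or.inl (by omega)
    · rw [key_lt_iff, hN1]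
      rcases lt_or_eq_of_le hge with h | h
      · exact Or.inl h
      · exact Or.inr ⟨h.symm, by omega⟩
  have hDSF := DS_finite x
  have hmemF : ∀ j, j ∈ hDSF.toFinset ↔ j ∈ DS x := fun j => Set.Finite.mem_toFinset _
  -- global minimum of key on DS
  obtain ⟨dm, hdmF, hdmmin⟩ :=
    Finset.exists_min_image hDSF.toFinset (key x) ⟨e1, (hmemF e1).mpr he1DS⟩
  have hdmDS : dm ∈ DS x := (hmemF dm).mp hdmF
  have hdmle1 : key x dm ≤ key x e1 := hdmmin e1 ((hmemF e1).mpr he1DS)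
  have hdmN : dm < 2*n+1 := by
    rcases (mem_DS_iff x hx dm).mp hdmDS with ⟨h, -⟩ | rfl | rfl
    · exact h
    · exact absurd (lt_of_le_of_lt hdmle1 (hkey_small e1 he1N hge1).1) (lt_irrefl _)
    · exact absurd (lt_of_le_of_lt hdmle1 (hkey_small e1 he1N hge1).2) (lt_irrefl _)
  have hbm : bset x dm = DS x \ {dm} := by
    rw [bset_eq]
    ext j
    simp only [Set.mem_sep_iff, Set.mem_diff, Set.mem_singleton_iff]
    constructor
    · rintro ⟨hjds, hlt⟩
      exact ⟨hjds, fun h => by subst h; exact lt_irrefl _ hlt⟩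
    · rintro ⟨hjds, hne'⟩
      refine ⟨hjds, lt_of_le_of_ne (hdmmin j ((hmemF j).mpr hjds)) ?_⟩
      intro hkeq
      exact hne' (key_injective x hkeq).symm
  have hbmcard : (bset x dm).ncard = n + 1 := by
    rw [hbm, ncard_DS_diff x hx (by rintro j rfl; exact hdmDS), Set.ncard_singleton]
    omega
  -- second minimum
  obtain ⟨e, heN, hgee, heDS, hene⟩ :
      ∃ e, e < 2*n+1 ∧ hgt x e ≤ 0 ∧ e ∈ DS x ∧ e ≠ dm := by
    by_cases h : e1 = dm
    · exact ⟨e2, he2N, hge2, he2DS, by omega⟩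
    · exact ⟨e1, he1N, hge1, he1DS, h⟩
  obtain ⟨d2, hd2F, hd2min⟩ :=
    Finset.exists_min_image (hDSF.toFinset.erase dm) (key x)
      ⟨e, Finset.mem_erase.mpr ⟨hene, (hmemF e).mpr heDS⟩⟩
  obtain ⟨hd2ne, hd2F'⟩ := Finset.mem_erase.mp hd2F
  have hd2DS : d2 ∈ DS x := (hmemF d2).mp hd2F'
  have hdmd2 : key x dm < key x d2 :=
    lt_of_le_of_ne (hdmmin d2 hd2F') (fun h => hd2ne (key_injective x h).symm)
  have hd2le : key x d2 ≤ key x e := hd2min e (Finset.mem_erase.mpr ⟨hene, (hmemF e).mpr heDS⟩)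
  have hd2N : d2 < 2*n+1 := by
    rcases (mem_DS_iff x hx d2).mp hd2DS with ⟨h, -⟩ | rfl | rfl
    · exact h
    · exact absurd (lt_of_le_of_lt hd2le (hkey_small e heN hgee).1) (lt_irrefl _)
    · exact absurd (lt_of_le_of_lt hd2le (hkey_small e heN hgee).2) (lt_irrefl _)
  have hb2 : bset x d2 = DS x \ {dm, d2} := by
    rw [bset_eq]
    ext j
    simp only [Set.mem_sep_iff, Set.mem_diff, Set.mem_insert_iff, Set.mem_singleton_iff, not_or]
    constructor
    · rintro ⟨hjds, hlt⟩
      refine ⟨hjds, ?_, ?_⟩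
      · rintro rfl
        exact lt_irrefl _ (lt_trans hdmd2 hlt)
      · rintro rfl
        exact lt_irrefl _ hlt
    · rintro ⟨hjds, hnedm, hned2⟩
      refine ⟨hjds, lt_of_le_of_ne
        (hd2min j (Finset.mem_erase.mpr ⟨hnedm, (hmemF j).mpr hjds⟩)) ?_⟩
      intro hkeq
      exact hned2 (key_injective x hkeq).symm
  have hb2card : (bset x d2).ncard = n := by
    rw [hb2, ncard_DS_diff x hx ?_, Set.ncard_pair (by omega : dm ≠ d2)]
    · omega
    · rintro j (rfl | rfl)
      · exact hdmDS
      · exact hd2DS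
  constructor
  · rw [matched_iff x _ n hx]
    exact ⟨d2, hd2N, hd2DS, hb2card⟩
  · rw [matched_iff x _ (n+1) hx]
    exact ⟨dm, hdmN, hdmDS, hbmcard⟩

end FLIV
namespace FLIV

variable {n : ℕ} (x : Fin (2*n+1) → Bool)

lemma hgt_neg_iff (j : ℕ) : hgt x j < 0 ↔ 2 * onesUpTo x j < j := by
  rw [hgt]; omega

lemma hgt_zero_iff (j : ℕ) : hgt x j = 0 ↔ j = 2 * onesUpTo x j := by
  rw [hgt]; omega

end FLIV

/-- For the two lexical matchings `M^n_{2n+1,n+1}` and `M^{n+1}_{2n+1,n+1}` between levels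
`n+1` and `n+2` of the `(2n+1)`-cube and a vertex `x` of level `n+1`: `x` is matched by the
first and unmatched by the second iff `x ∈ D^{=0}_{2n+1,n+1}`; matched by the second and
unmatched by the first iff `x ∈ D^-_{2n+1,n+1}`; unmatched by both iff
`x ∈ D^{>0}_{2n+1,n+1}`. -/
theorem first_last_isolated_vertices (n : ℕ) (hn : 1 ≤ n)
    (x : Fin (2 * n + 1) → Bool) (hx : wt x = n + 1) :
    (((∃ y, lexUp (2 * n + 1) (n + 1) n x y) ∧
        ¬ (∃ y, lexUp (2 * n + 1) (n + 1) (n + 1) x y)) ↔ inDeq0 (2 * n + 1) (n + 1) x) ∧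
    (((∃ y, lexUp (2 * n + 1) (n + 1) (n + 1) x y) ∧
        ¬ (∃ y, lexUp (2 * n + 1) (n + 1) n x y)) ↔ inDminus (2 * n + 1) (n + 1) x) ∧
    ((¬ (∃ y, lexUp (2 * n + 1) (n + 1) n x y) ∧
        ¬ (∃ y, lexUp (2 * n + 1) (n + 1) (n + 1) x y)) ↔ inDgt0 (2 * n + 1) (n + 1) x) := by

  classical
  open FLIV in
  by_cases hneg : ∃ j, j ≤ 2*n+1 ∧ 2 * onesUpTo x j < j
  · by_cases hone : ({j : ℕ | j ≤ 2*n+1 ∧ 2 * onesUpTo x j < j}).ncard = 1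
    · -- case C : D^-
      obtain ⟨j1, hj1eq⟩ := Set.ncard_eq_one.mp hone
      have hj1mem : j1 ∈ {j : ℕ | j ≤ 2*n+1 ∧ 2 * onesUpTo x j < j} := by
        rw [hj1eq]; rfl
      obtain ⟨hj1N, hj1neg'⟩ := hj1mem
      have hj1neg : hgt x j1 < 0 := (hgt_neg_iff x j1).mpr hj1neg'
      have huniq : ∀ j ≤ 2*n+1, hgt x j < 0 → j = j1 := by
        intro j hj hg
        have : j ∈ {j : ℕ | j ≤ 2*n+1 ∧ 2 * onesUpTo x j < j} :=
          ⟨hj, (hgt_neg_iff x j).mp hg⟩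
        rwa [hj1eq] at this
      obtain ⟨hMb, hnMa⟩ := statusC x hn hx j1 hj1N hj1neg huniq
      have hDminus : inDminus (2*n+1) (n+1) x := ⟨hx, hone⟩
      have hnDeq0 : ¬ inDeq0 (2*n+1) (n+1) x := by
        rintro ⟨⟨-, hD⟩, -⟩
        have := hD j1 hj1N
        omega
      have hnDgt0 : ¬ inDgt0 (2*n+1) (n+1) x := by
        rintro ⟨-, hD⟩
        have hj11 : 1 ≤ j1 := by omega
        have := hD j1 hj11 hj1N
        omega
      tauto
    · -- case D
      obtain ⟨a, haN, haneg⟩ := hneg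
      have hb : ∃ b, (b ≤ 2*n+1 ∧ 2 * onesUpTo x b < b) ∧ b ≠ a := by
        by_contra hcon
        push_neg at hcon
        apply hone
        apply Set.ncard_eq_one.mpr ⟨a, ?_⟩
        ext j
        simp only [Set.mem_setOf_eq, Set.mem_singleton_iff]
        constructor
        · intro hj; exact hcon j hj
        · rintro rfl; exact ⟨haN, haneg⟩
      obtain ⟨b, ⟨hbN, hbneg⟩, hba⟩ := hb
      have hga : hgt x a < 0 := (hgt_neg_iff x a).mpr haneg
      have hgb : hgt x b < 0 := (hgt_neg_iff x b).mpr hbneg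
      have hD : (∃ y, lexUp (2*n+1) (n+1) n x y) ∧ (∃ y, lexUp (2*n+1) (n+1) (n+1) x y) := by
        rcases lt_or_gt_of_ne hba with h | h
        · exact statusD x hn hx hbN haN h hgb hga
        · exact statusD x hn hx haN hbN h hga hgb
      obtain ⟨hMa, hMb⟩ := hD
      have hnDminus : ¬ inDminus (2*n+1) (n+1) x := by
        rintro ⟨-, h⟩; exact hone h
      have hnDeq0 : ¬ inDeq0 (2*n+1) (n+1) x := by
        rintro ⟨⟨-, hD'⟩, -⟩
        have := hD' a haN
        omega
      have hnDgt0 : ¬ inDgt0 (2*n+1) (n+1) x := by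
        rintro ⟨-, hD'⟩
        have ha1 : 1 ≤ a := by omega
        have := hD' a ha1 haN
        omega
      tauto
  · push_neg at hneg
    by_cases hzero : ∃ j, 1 ≤ j ∧ j ≤ 2*n+1 ∧ j = 2 * onesUpTo x j
    · -- case B : D^{=0}
      have hge : ∀ j ≤ 2*n+1, 0 ≤ hgt x j := by
        intro j hj
        have := hneg j hj
        rw [hgt]
        omega
      have hex : ∃ j, 1 ≤ j ∧ j ≤ 2*n+1 ∧ hgt x j = 0 := by
        obtain ⟨j, h1, h2, h3⟩ := hzero
        exact ⟨j, h1, h2, (hgt_zero_iff x j).mpr h3⟩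
      obtain ⟨hMa, hnMb⟩ := statusB x hn hx hge hex
      have hDeq0 : inDeq0 (2*n+1) (n+1) x := by
        refine ⟨⟨hx, fun j hj => ?_⟩, hzero⟩
        have := hneg j hj
        omega
      have hnDminus : ¬ inDminus (2*n+1) (n+1) x := by
        rintro ⟨-, hcard⟩
        obtain ⟨j, hj1, hj2⟩ := Set.nonempty_of_ncard_ne_zero (by rw [hcard]; omega)
        exact absurd hj2 (by have := hneg j hj1; omega)
      have hnDgt0 : ¬ inDgt0 (2*n+1) (n+1) x := by
        rintro ⟨-, hD'⟩
        obtain ⟨j, h1, h2, h3⟩ := hzero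
        have := hD' j h1 h2
        omega
      tauto
    · -- case A : D^{>0}
      push_neg at hzero
      have hpos : ∀ j, 1 ≤ j → j ≤ 2*n+1 → 0 < hgt x j := by
        intro j h1 h2
        have := hneg j h2
        have := hzero j h1 h2
        rw [hgt]
        omega
      have hnMa := statusA x hn hx hpos n le_rfl
      have hnMb := statusA x hn hx hpos (n+1) (by omega)
      have hDgt0 : inDgt0 (2*n+1) (n+1) x := by
        refine ⟨hx, fun j h1 h2 => ?_⟩
        have := hneg j h2
        have := hzero j h1 h2
        omega
      have hnDeq0 : ¬ inDeq0 (2*n+1) (n+1) x := by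
        rintro ⟨-, j, h1, h2, h3⟩
        exact hzero j h1 h2 h3
      have hnDminus : ¬ inDminus (2*n+1) (n+1) x := by
        rintro ⟨-, hcard⟩
        obtain ⟨j, hj1, hj2⟩ := Set.nonempty_of_ncard_ne_zero (by rw [hcard]; omega)
        exact absurd hj2 (by have := hneg j hj1; omega)
      tauto
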